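/- The set X(0) of strings over {0,1} (with infinitely many 0s and infinitely many 1s) whose maximal blocks of consecutive 0s have uniformly bounded length is upward closed under quasi-isometric reducibility: if α ∈ X(0) and there is a quasi-isometry from α to β, then β ∈ X(0). -/
import Mathlib


def IsQI {Γ : Type*} (α β : ℕ → Γ) (f : ℕ → ℕ) (A B : ℝ) : Prop :=
  1 ≤ A ∧ 0 ≤ B ∧ (∀ n, α n = β (f n)) ∧
  (∀ x y : ℕ, (1 / A) * |(x : ℝ) - (y : ℝ)| - B ≤ |(f x : ℝ) - (f y : ℝ)| ∧
      |(f x : ℝ) - (f y : ℝ)| ≤ A * |(x : ℝ) - (y : ℝ)| + B) ∧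
  (∀ m : ℕ, ∃ x : ℕ, |(m : ℝ) - (f x : ℝ)| ≤ A)

/-- `α ≤_QI β`: there is a quasi-isometry from `α` to `β`. -/
def QI {Γ : Type*} (α β : ℕ → Γ) : Prop := ∃ f A B, IsQI α β f A B

/-- `α ∈ X(0)`: the lengths of intervals of consecutive positions coloured `0` are
uniformly bounded. -/
def memX0 (α : ℕ → Fin 2) : Prop := ∃ K : ℕ, ∀ i len : ℕ, (∀ j < len, α (i + j) = 0) → len ≤ K

lemma fin2_eq_one_of_ne_zero (v : Fin 2) (h : v ≠ 0) : v = 1 := by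
  fin_cases v <;> simp_all

/-- `X(0)` is upward closed under quasi-isometric reducibility (on strings with
infinitely many 0s and infinitely many 1s). -/
theorem X0_upward_closed (α β : ℕ → Fin 2)
    (hα0 : ∀ N, ∃ i, N < i ∧ α i = 0) (hα1 : ∀ N, ∃ i, N < i ∧ α i = 1)
    (hX : memX0 α) (h : QI α β) :
    (∀ N, ∃ i, N < i ∧ β i = 0) ∧ (∀ N, ∃ i, N < i ∧ β i = 1) ∧ memX0 β := by
  obtain ⟨f, A, B, hA, hB, hcol, hineq, hsurj⟩ := h
  have hApos : (0:ℝ) < A := lt_of_lt_of_le one_pos hA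
  -- growth: if x is big then f x is big
  have hgrow : ∀ N x : ℕ, ⌈A*((N:ℝ)+1+B+(f 0))⌉₊ < x → N < f x := by
    intro N x hx
    have h1 := (hineq x 0).1
    have hxr : (⌈A*((N:ℝ)+1+B+(f 0))⌉₊ : ℝ) < x := by exact_mod_cast hx
    have hceil : A*((N:ℝ)+1+B+(f 0)) ≤ (⌈A*((N:ℝ)+1+B+(f 0))⌉₊ : ℝ) := Nat.le_ceil _
    have habs1 : |(x:ℝ) - ((0:ℕ):ℝ)| = x := by simp
    rw [habs1] at h1
    have h2 : |(f x : ℝ) - (f 0 : ℝ)| ≤ (f x : ℝ) + (f 0 : ℝ) := by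
      have n1 : (0:ℝ) ≤ (f x:ℝ) := Nat.cast_nonneg _
      have n2 : (0:ℝ) ≤ (f 0:ℝ) := Nat.cast_nonneg _
      rcases abs_cases ((f x:ℝ) - (f 0:ℝ)) with ⟨he, _⟩ | ⟨he, _⟩ <;>
        rw [he] <;> linarith
    have hdiv : (N:ℝ)+1+B+(f 0) < (1/A) * x := by
      rw [div_mul_eq_mul_div, one_mul, lt_div_iff₀ hApos]
      nlinarith
    have : (N:ℝ) < f x := by linarith
    exact_mod_cast this
  refine ⟨?_, ?_, ?_⟩
  · intro N
    obtain ⟨x, hx1, hx0⟩ := hα0 (⌈A*((N:ℝ)+1+B+(f 0))⌉₊)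
    exact ⟨f x, hgrow N x hx1, by rw [← hcol]; exact hx0⟩
  · intro N
    obtain ⟨x, hx1, hx0⟩ := hα1 (⌈A*((N:ℝ)+1+B+(f 0))⌉₊)
    exact ⟨f x, hgrow N x hx1, by rw [← hcol]; exact hx0⟩
  · obtain ⟨K, hK⟩ := hX
    set D : ℕ := ⌈A*((K:ℝ)+2)+B⌉₊ with hDdef
    refine ⟨2*D+2, ?_⟩
    intro i len hlen
    by_contra hcon
    push_neg at hcon
    -- hcon : 2*D+2 < len
    obtain ⟨x, hx⟩ := hsurj (i + D)
    -- find a 1 of α near x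
    have hex : ¬ ∀ j < K+1, α (x+j) = 0 := by
      intro hall
      have := hK x (K+1) hall
      omega
    push_neg at hex
    obtain ⟨j, hjK, hj0⟩ := hex
    have hj1 : α (x+j) = 1 := fin2_eq_one_of_ne_zero _ hj0
    have hb1 : β (f (x+j)) = 1 := by rw [← hcol]; exact hj1
    have hup := (hineq (x+j) x).2
    have habsj : |((x+j:ℕ):ℝ) - (x:ℝ)| = j := by
      push_cast; rw [add_sub_cancel_left]; exact abs_of_nonneg (Nat.cast_nonneg j)
    rw [habsj] at hup
    have hjle : (j:ℝ) ≤ K := by exact_mod_cast Nat.lt_succ_iff.mp hjK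
    have hDge : A*((K:ℝ)+2)+B ≤ (D:ℝ) := Nat.le_ceil _
    have key : |(f (x+j):ℝ) - ((i+D:ℕ):ℝ)| ≤ (D:ℝ) := by
      have tri := abs_sub_le (f (x+j):ℝ) (f x:ℝ) ((i+D:ℕ):ℝ)
      have h3 : |(f x:ℝ) - ((i+D:ℕ):ℝ)| = |((i+D:ℕ):ℝ) - (f x:ℝ)| := abs_sub_comm _ _
      rw [h3] at tri
      nlinarith
    have hkey := abs_le.mp key
    have hDnn : (0:ℝ) ≤ D := Nat.cast_nonneg D
    have hle1 : (i:ℝ) ≤ (f (x+j) : ℝ) := by push_cast at hkey ⊢; linarith [hkey.1]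
    have hle2 : (f (x+j) : ℝ) ≤ (i:ℝ) + 2*(D:ℝ) := by push_cast at hkey ⊢; linarith [hkey.2]
    have hi1 : i ≤ f (x+j) := by exact_mod_cast hle1
    have hi2 : f (x+j) ≤ i + 2*D := by exact_mod_cast (by push_cast; linarith : (f (x+j):ℝ) ≤ ((i + 2*D : ℕ):ℝ))
    have hlt : f (x+j) < i + len := by omega
    have hz := hlen (f (x+j) - i) (by omega)
    rw [Nat.add_sub_cancel' hi1] at hz
    rw [hz] at hb1
    exact absurd hb1 (by decide)
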